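/- Let W ⊆ ℝ^d be a convex set, let f : ℝ^d → ℝ be convex on W, let λ, r > 0, and let w* ∈ W be a global minimizer of f over W such that f grows quadratically near w*: for every w ∈ W with ‖w − w*‖ ≤ r, f(w) − f(w*) ≥ (λ/8)‖w − w*‖². Then for every w ∈ W with f(w) − f(w*) < λr²/8, one has ‖w − w*‖ ≤ √( (8/λ)(f(w) − f(w*)) ), i.e. the distance bound holds even for points outside the ball of radius r. -/

import Mathlib

/-- For a convex function with local quadratic growth of modulus `λ/4` around a global
minimizer `w*` on a ball of radius `r`, any point of `W` whose excess value is below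
`λ r² / 8` satisfies the corresponding distance bound, even outside the ball. -/
theorem quadratic_growth_extends_outside_ball
    {d : ℕ} (W : Set (EuclideanSpace ℝ (Fin d))) (hW : Convex ℝ W)
    (f : EuclideanSpace ℝ (Fin d) → ℝ) (hconv : ConvexOn ℝ W f)
    (lam r : ℝ) (hlam : 0 < lam) (hr : 0 < r)
    (wstar : EuclideanSpace ℝ (Fin d)) (hws : wstar ∈ W)
    (hmin : ∀ w ∈ W, f wstar ≤ f w)
    (hqg : ∀ w ∈ W, ‖w - wstar‖ ≤ r → lam / 8 * ‖w - wstar‖ ^ 2 ≤ f w - f wstar) :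
    ∀ w ∈ W, f w - f wstar < lam * r ^ 2 / 8 →
      ‖w - wstar‖ ≤ Real.sqrt (8 / lam * (f w - f wstar)) := by
  intro w hw hsmall
  have hD0 : 0 ≤ f w - f wstar := sub_nonneg.2 (hmin w hw)
  have hle : ‖w - wstar‖ ≤ r := by
    by_contra h
    push_neg at h
    set n := ‖w - wstar‖ with hn
    have hn0 : 0 < n := lt_trans hr h
    set t : ℝ := r / n with ht
    have ht0 : 0 < t := div_pos hr hn0
    have ht1 : t < 1 := (div_lt_one hn0).2 h
    set u := wstar + t • (w - wstar) with hu
    have huW : u ∈ W := by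
      have := hW hws hw (by linarith : (0:ℝ) ≤ 1 - t) (le_of_lt ht0) (by ring)
      convert this using 1
      rw [hu]
      module
    have hnorm : ‖u - wstar‖ = r := by
      have : u - wstar = t • (w - wstar) := by rw [hu]; abel
      rw [this, norm_smul, Real.norm_eq_abs, abs_of_pos ht0, ht]
      field_simp
      exact hn.symm
    have h1 : lam / 8 * r ^ 2 ≤ f u - f wstar := by
      have := hqg u huW (le_of_eq hnorm)
      rwa [hnorm] at this
    have h2 : f u ≤ (1 - t) * f wstar + t * f w := by
      have := hconv.2 hws hw (by linarith : (0:ℝ) ≤ 1 - t) (le_of_lt ht0) (by ring)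
      have e : u = (1 - t) • wstar + t • w := by rw [hu]; module
      rw [e]; simpa only [smul_eq_mul] using this
    have h3 : f u - f wstar ≤ t * (f w - f wstar) := by nlinarith
    have h4 : t * (f w - f wstar) ≤ f w - f wstar :=
      mul_le_of_le_one_left hD0 (le_of_lt ht1)
    linarith
  have hkey := hqg w hw hle
  have h5 : ‖w - wstar‖ ^ 2 ≤ 8 / lam * (f w - f wstar) := by
    rw [div_mul_eq_mul_div, le_div_iff₀ hlam]
    nlinarith
  calc ‖w - wstar‖ = Real.sqrt (‖w - wstar‖ ^ 2) := by
        rw [Real.sqrt_sq (norm_nonneg _)]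
    _ ≤ Real.sqrt (8 / lam * (f w - f wstar)) := Real.sqrt_le_sqrt h5
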